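/- Let $n \geq 1$ be an integer and $p \in (0,1)$. Let $B$ be a binomial random variable with parameters $(n,p)$ and $L$ be a Poisson random variable with parameter $np$. Then for every set $D$ of nonnegative integers, $|P(L \in D) - P(B \in D)| \leq np^2$. -/

import Mathlib

open MeasureTheory Real Finset

noncomputable def pois (lam : ℝ) (k : ℕ) : ℝ := Real.exp (-lam) * lam ^ k / (Nat.factorial k)

noncomputable def binom (n : ℕ) (p : ℝ) (k : ℕ) : ℝ := (n.choose k : ℝ) * p ^ k * (1 - p) ^ (n - k)

noncomputable def bern (p : ℝ) (k : ℕ) : ℝ := if k = 0 then 1 - p else if k = 1 then p else 0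

noncomputable def conv (f g : ℕ → ℝ) (k : ℕ) : ℝ := ∑ j ∈ range (k + 1), f j * g (k - j)

lemma pois_nonneg {lam : ℝ} (h : 0 ≤ lam) (k : ℕ) : 0 ≤ pois lam k := by
  unfold pois; positivity

lemma summable_pois (lam : ℝ) : Summable (pois lam) := by
  unfold pois
  simpa [mul_div_assoc] using (Real.summable_pow_div_factorial lam).mul_left (Real.exp (-lam))

lemma tsum_pois (lam : ℝ) : ∑' k, pois lam k = 1 := by
  unfold pois
  rw [tsum_eq_tsum_of_hasSum_iff_hasSum (fun {a} => Iff.rfl)]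
  have h : ∑' k : ℕ, lam ^ k / (Nat.factorial k) = Real.exp lam := by
    rw [Real.exp_eq_exp_ℝ, NormedSpace.exp_eq_tsum_div]
  calc ∑' k : ℕ, Real.exp (-lam) * lam ^ k / (Nat.factorial k)
      = Real.exp (-lam) * ∑' k : ℕ, lam ^ k / (Nat.factorial k) := by
        rw [← tsum_mul_left]; simp [mul_div_assoc]
    _ = 1 := by rw [h, ← Real.exp_add]; simp

lemma binom_nonneg {n : ℕ} {p : ℝ} (h0 : 0 ≤ p) (h1 : p ≤ 1) (k : ℕ) : 0 ≤ binom n p k := by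
  unfold binom
  have : 0 ≤ 1 - p := by linarith
  positivity

lemma binom_eq_zero {n k : ℕ} (h : n < k) (p : ℝ) : binom n p k = 0 := by
  unfold binom
  rw [Nat.choose_eq_zero_of_lt h]; simp

lemma summable_binom (n : ℕ) (p : ℝ) : Summable (binom n p) :=
  summable_of_ne_finset_zero (s := range (n + 1)) fun k hk =>
    binom_eq_zero (by simpa using hk) p

lemma tsum_binom (n : ℕ) (p : ℝ) : ∑' k, binom n p k = 1 := by
  rw [tsum_eq_sum (s := range (n + 1)) fun k hk => binom_eq_zero (by simpa using hk) p]
  have := add_pow p (1 - p) n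
  simp only [add_sub_cancel, one_pow] at this
  rw [this]; unfold binom
  exact Finset.sum_congr rfl fun k _ => by ring

lemma bern_nonneg {p : ℝ} (h0 : 0 ≤ p) (h1 : p ≤ 1) (k : ℕ) : 0 ≤ bern p k := by
  unfold bern; split_ifs <;> linarith

lemma conv_bern_zero (p : ℝ) (g : ℕ → ℝ) : conv (bern p) g 0 = (1 - p) * g 0 := by
  simp [conv, bern]

lemma conv_bern_succ (p : ℝ) (g : ℕ → ℝ) (k : ℕ) :
    conv (bern p) g (k + 1) = (1 - p) * g (k + 1) + p * g k := by
  unfold conv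
  rw [Finset.sum_range_succ']
  rw [Finset.sum_range_succ']
  have h0 : ∀ i ∈ range k, bern p (i + 1 + 1) * g (k + 1 - (i + 1 + 1)) = 0 := by
    intro i _; simp [bern]
  rw [Finset.sum_eq_zero h0]
  simp [bern]; ring

lemma binom_succ (n : ℕ) (p : ℝ) : binom (n + 1) p = conv (bern p) (binom n p) := by
  funext k
  cases k with
  | zero =>
    rw [conv_bern_zero]
    unfold binom
    simp [pow_succ]; ring
  | succ k =>
    rw [conv_bern_succ]
    unfold binom
    rcases le_or_gt (k + 1) n with h | h
    · have h1 : n + 1 - (k + 1) = (n - (k + 1)) + 1 := by omega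
      have h2 : n - k = (n - (k + 1)) + 1 := by omega
      rw [Nat.choose_succ_succ' n k]
      push_cast
      rw [h2]
      ring
    · rcases le_or_gt (k + 1) (n + 1) with h' | h'
      · have hk : k = n := by omega
        subst hk
        simp [Nat.choose_succ_self, Nat.choose_self]
        ring
      · rw [Nat.choose_eq_zero_of_lt h', Nat.choose_eq_zero_of_lt (by omega),
          Nat.choose_eq_zero_of_lt (by omega)]
        simp

lemma pois_add (a b : ℝ) : pois (a + b) = conv (pois a) (pois b) := by
  funext k
  unfold conv pois
  have hk : (Nat.factorial k : ℝ) ≠ 0 := by positivity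
  rw [add_pow]
  rw [Finset.mul_sum, Finset.sum_div]
  refine Finset.sum_congr rfl fun j hj => ?_
  have hjk : j ≤ k := by simpa using Nat.lt_succ_iff.mp (Finset.mem_range.mp hj)
  have hfac : (k.choose j : ℝ) * (Nat.factorial j) * (Nat.factorial (k - j)) = Nat.factorial k := by
    exact_mod_cast Nat.choose_mul_factorial_mul_factorial hjk
  have hj0 : (Nat.factorial j : ℝ) ≠ 0 := by positivity
  have hj1 : (Nat.factorial (k - j) : ℝ) ≠ 0 := by positivity
  rw [neg_add, Real.exp_add]
  field_simp
  rw [← hfac]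
  ring

lemma summable_abs_of_nonneg {f : ℕ → ℝ} (hf : Summable f) (h : ∀ k, 0 ≤ f k) :
    Summable fun k => ‖f k‖ := by
  simpa [Real.norm_eq_abs, abs_of_nonneg (h _)] using hf

lemma summable_conv {u v : ℕ → ℝ} (hu : Summable u) (hv : Summable v)
    (hu0 : ∀ k, 0 ≤ u k) (hv0 : ∀ k, 0 ≤ v k) : Summable (conv u v) :=
  summable_sum_mul_range_of_summable_norm' (summable_abs_of_nonneg hu hu0) hu
    (summable_abs_of_nonneg hv hv0) hv

lemma tsum_conv {u v : ℕ → ℝ} (hu : Summable u) (hv : Summable v)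
    (hu0 : ∀ k, 0 ≤ u k) (hv0 : ∀ k, 0 ≤ v k) :
    ∑' k, conv u v k = (∑' k, u k) * (∑' k, v k) :=
  (tsum_mul_tsum_eq_tsum_sum_range_of_summable_norm (summable_abs_of_nonneg hu hu0)
    (summable_abs_of_nonneg hv hv0)).symm

lemma conv_nonneg {u v : ℕ → ℝ} (hu0 : ∀ k, 0 ≤ u k) (hv0 : ∀ k, 0 ≤ v k) (k : ℕ) :
    0 ≤ conv u v k :=
  Finset.sum_nonneg fun j _ => mul_nonneg (hu0 j) (hv0 _)

/-- Key pointwise bound for the L1 distance of convolutions. -/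
lemma abs_conv_sub_conv_le {f f' g g' : ℕ → ℝ} (hf' : ∀ k, 0 ≤ f' k) (hg : ∀ k, 0 ≤ g k)
    (k : ℕ) :
    |conv f g k - conv f' g' k| ≤
      conv (fun j => |f j - f' j|) g k + conv f' (fun j => |g j - g' j|) k := by
  unfold conv
  rw [← Finset.sum_sub_distrib, ← Finset.sum_add_distrib]
  refine (Finset.abs_sum_le_sum_abs _ _).trans (Finset.sum_le_sum fun j _ => ?_)
  have : f j * g (k - j) - f' j * g' (k - j)
      = (f j - f' j) * g (k - j) + f' j * (g (k - j) - g' (k - j)) := by ring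
  rw [this]
  refine (abs_add_le _ _).trans ?_
  rw [abs_mul, abs_mul, abs_of_nonneg (hg _), abs_of_nonneg (hf' _)]

/-- L1 distance between convolutions is bounded. -/
lemma tsum_abs_conv_sub_conv_le {f f' g g' : ℕ → ℝ}
    (hfs : Summable f) (hf's : Summable f') (hgs : Summable g) (hg's : Summable g')
    (hf0 : ∀ k, 0 ≤ f k) (hf'0 : ∀ k, 0 ≤ f' k) (hg0 : ∀ k, 0 ≤ g k) (hg'0 : ∀ k, 0 ≤ g' k) :
    ∑' k, |conv f g k - conv f' g' k| ≤
      (∑' k, |f k - f' k|) * (∑' k, g k) + (∑' k, f' k) * (∑' k, |g k - g' k|) := by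
  have hd1 : Summable fun j => |f j - f' j| := (hfs.sub hf's).abs
  have hd2 : Summable fun j => |g j - g' j| := (hgs.sub hg's).abs
  have h1 : Summable (conv (fun j => |f j - f' j|) g) :=
    summable_conv hd1 hgs (fun _ => abs_nonneg _) hg0
  have h2 : Summable (conv f' (fun j => |g j - g' j|)) :=
    summable_conv hf's hd2 hf'0 (fun _ => abs_nonneg _)
  have hb := abs_conv_sub_conv_le (g := g) (f := f) (f' := f') (g' := g') hf'0 hg0
  calc ∑' k, |conv f g k - conv f' g' k|
      ≤ ∑' k, (conv (fun j => |f j - f' j|) g k + conv f' (fun j => |g j - g' j|) k) := by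
        refine Summable.tsum_le_tsum hb ?_ (h1.add h2)
        exact Summable.of_nonneg_of_le (fun k => abs_nonneg _) hb (h1.add h2)
    _ = (∑' k, |f k - f' k|) * (∑' k, g k) + (∑' k, f' k) * (∑' k, |g k - g' k|) := by
        rw [Summable.tsum_add h1 h2, tsum_conv hd1 hgs (fun _ => abs_nonneg _) hg0,
          tsum_conv hf's hd2 hf'0 (fun _ => abs_nonneg _)]

lemma binom_one (p : ℝ) : binom 1 p = bern p := by
  funext k
  match k with
  | 0 => simp [binom, bern]
  | 1 => simp [binom, bern]
  | (k + 2) => simp [binom, bern, Nat.choose_eq_zero_of_lt (by omega : 1 < k + 2)]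

lemma tsum_pois_tail (lam : ℝ) :
    ∑' k, pois lam (k + 2) = 1 - pois lam 0 - pois lam 1 := by
  have hs : Summable (pois lam) := summable_pois lam
  have hs1 : Summable fun k => pois lam (k + 1) := (summable_nat_add_iff 1).mpr hs
  have h1 := Summable.tsum_eq_zero_add hs
  have h2 := Summable.tsum_eq_zero_add hs1
  rw [tsum_pois] at h1
  have he : ∑' k, pois lam (k + 1 + 1) = ∑' k, pois lam (k + 2) := by norm_num
  rw [he] at h2
  linarith

lemma summable_bern (p : ℝ) : Summable (bern p) := by
  refine summable_of_ne_finset_zero (s := range 2) fun k hk => ?_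
  simp only [Finset.mem_range, not_lt] at hk
  unfold bern
  rw [if_neg (by omega), if_neg (by omega)]

lemma l1_bern_pois {p : ℝ} (hp0 : 0 ≤ p) (hp1 : p ≤ 1) :
    ∑' k, |bern p k - pois p k| ≤ 2 * p ^ 2 := by
  have hexp : 1 - p ≤ Real.exp (-p) := by
    have := Real.add_one_le_exp (-p); linarith
  have hexp1 : Real.exp (-p) ≤ 1 := Real.exp_le_one_iff.mpr (by linarith)
  set h : ℕ → ℝ := fun k => |bern p k - pois p k| with hh
  have hsum : Summable h := ((summable_bern p).sub (summable_pois p)).abs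
  have hsum1 : Summable fun k => h (k + 1) := (summable_nat_add_iff 1).mpr hsum
  have h1 := Summable.tsum_eq_zero_add hsum
  have h2 := Summable.tsum_eq_zero_add hsum1
  have he : ∑' k, h (k + 1 + 1) = ∑' k, h (k + 2) := by norm_num
  rw [he] at h2
  have hp00 : pois p 0 = Real.exp (-p) := by simp [pois]
  have hp01 : pois p 1 = Real.exp (-p) * p := by simp [pois]
  have hh0 : h 0 = Real.exp (-p) - (1 - p) := by
    have : bern p 0 = 1 - p := by simp [bern]
    simp only [hh, this, pois]
    rw [abs_of_nonpos (by simp; linarith)]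
    simp
  have hh1 : h 1 = p - Real.exp (-p) * p := by
    have : bern p 1 = p := by simp [bern]
    simp only [hh, this, pois]
    rw [abs_of_nonneg (by simp; nlinarith [Real.exp_pos (-p)])]
    simp
  have hh2 : ∀ k, h (k + 2) = pois p (k + 2) := by
    intro k
    simp only [hh, bern]
    rw [if_neg (by omega), if_neg (by omega)]
    rw [abs_of_nonpos (by linarith [pois_nonneg hp0 (k + 2)])]
    ring
  have htail : ∑' k, h (k + 2) = 1 - pois p 0 - pois p 1 := by
    rw [tsum_congr hh2, tsum_pois_tail]
  have : ∑' k, h k = 2 * p - 2 * p * Real.exp (-p) := by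
    rw [h1, h2, htail, hh0, hh1, hp00, hp01]; ring
  rw [this]
  nlinarith [Real.exp_pos (-p)]

lemma lecam {p : ℝ} (hp0 : 0 ≤ p) (hp1 : p ≤ 1) (n : ℕ) :
    ∑' k, |binom n p k - pois (n * p) k| ≤ 2 * n * p ^ 2 := by
  induction n with
  | zero =>
    have : ∀ k, binom 0 p k = pois ((0 : ℕ) * p) k := by
      intro k
      cases k with
      | zero => simp [binom, pois]
      | succ k => simp [binom, pois, Nat.choose_eq_zero_of_lt (Nat.succ_pos k)]
    simp only [this]
    simp
  | succ n ih =>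
    have hcast : ((n + 1 : ℕ) : ℝ) * p = p + (n : ℝ) * p := by push_cast; ring
    rw [hcast, pois_add, binom_succ]
    have key := tsum_abs_conv_sub_conv_le (f := bern p) (f' := pois p) (g := binom n p)
      (g' := pois ((n : ℝ) * p)) (summable_bern p) (summable_pois p) (summable_binom n p)
      (summable_pois _) (bern_nonneg hp0 hp1) (pois_nonneg (by linarith))
      (binom_nonneg hp0 hp1) (pois_nonneg (by positivity))
    refine key.trans ?_
    rw [tsum_binom, tsum_pois]
    have h1 := l1_bern_pois hp0 hp1
    push_cast
    nlinarith [ih, h1]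

set_option maxHeartbeats 800000 in
lemma measure_preimage_eq {Ω : Type*} [MeasurableSpace Ω] (μ : Measure Ω)
    [IsProbabilityMeasure μ] (X : Ω → ℕ) (f : ℕ → ℝ) (hf0 : ∀ k, 0 ≤ f k)
    (hsum : Summable f) (htot : ∑' k, f k = 1)
    (hX : ∀ k, μ {ω | X ω = k} = ENNReal.ofReal (f k)) (D : Set ℕ) :
    μ (X ⁻¹' D) = ENNReal.ofReal (∑' k, D.indicator f k) := by
  set F : ℕ → ENNReal := fun k => ENNReal.ofReal (f k) with hF
  have hFtot : ∑' k, F k = 1 := by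
    rw [hF, ← ENNReal.ofReal_tsum_of_nonneg hf0 hsum, htot, ENNReal.ofReal_one]
  -- subadditivity upper bound for any set
  have hub : ∀ E : Set ℕ, μ (X ⁻¹' E) ≤ ∑' k : E, F k := by
    intro E
    have hcover : X ⁻¹' E = ⋃ k ∈ E, {ω | X ω = k} := by
      ext ω; simp [Set.mem_preimage]
    rw [hcover]
    refine (measure_biUnion_le μ E.to_countable _).trans ?_
    exact le_of_eq (tsum_congr fun k => hX k)
  have hsplit : ∀ E : Set ℕ, (∑' k : E, F k) + (∑' k : (Eᶜ : Set ℕ), F k) = 1 := by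
    intro E
    rw [← hFtot]
    exact Summable.tsum_add_tsum_compl (f := F) ENNReal.summable ENNReal.summable
  have hlb : ∀ E : Set ℕ, (∑' k : E, F k) ≤ μ (X ⁻¹' E) := by
    intro E
    have hunion : (X ⁻¹' E) ∪ (X ⁻¹' (Eᶜ : Set ℕ)) = Set.univ := by
      ext ω; simp [Set.mem_preimage]
    have h1 : (1 : ENNReal) ≤ μ (X ⁻¹' E) + μ (X ⁻¹' (Eᶜ : Set ℕ)) := by
      calc (1 : ENNReal) = μ Set.univ := (measure_univ).symm
        _ = μ ((X ⁻¹' E) ∪ (X ⁻¹' (Eᶜ : Set ℕ))) := by rw [hunion]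
        _ ≤ _ := measure_union_le _ _
    have h2 : (∑' k : E, F k) + (∑' k : (Eᶜ : Set ℕ), F k) ≤
        μ (X ⁻¹' E) + (∑' k : (Eᶜ : Set ℕ), F k) := by
      calc (∑' k : E, F k) + (∑' k : (Eᶜ : Set ℕ), F k) = 1 := hsplit E
        _ ≤ μ (X ⁻¹' E) + μ (X ⁻¹' (Eᶜ : Set ℕ)) := h1
        _ ≤ μ (X ⁻¹' E) + (∑' k : (Eᶜ : Set ℕ), F k) := by gcongr; exact hub _
    have hne : (∑' k : (Eᶜ : Set ℕ), F k) ≠ ⊤ := by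
      intro hc
      have := hsplit E
      rw [hc] at this
      simp at this
    exact (ENNReal.add_le_add_iff_right hne).mp h2
  have heq : μ (X ⁻¹' D) = ∑' k : D, F k := le_antisymm (hub D) (hlb D)
  rw [heq, hF, ← ENNReal.ofReal_tsum_of_nonneg (fun k : D => hf0 k) (hsum.subtype D),
    tsum_subtype D f]

theorem poisson_binomial_approximation
    (n : ℕ) (hn : 1 ≤ n) (p : ℝ) (hp : p ∈ Set.Ioo (0 : ℝ) 1)
    {Ω₁ Ω₂ : Type*} [MeasurableSpace Ω₁] [MeasurableSpace Ω₂]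
    (μ : Measure Ω₁) (ν : Measure Ω₂)
    [IsProbabilityMeasure μ] [IsProbabilityMeasure ν]
    (L : Ω₁ → ℕ) (B : Ω₂ → ℕ)
    (hL : ∀ k : ℕ, μ {ω | L ω = k} =
      ENNReal.ofReal (Real.exp (-(n * p)) * (n * p) ^ k / (Nat.factorial k)))
    (hB : ∀ k : ℕ, ν {ω | B ω = k} =
      ENNReal.ofReal ((n.choose k : ℝ) * p ^ k * (1 - p) ^ (n - k)))
    (D : Set ℕ) :
    |(μ (L ⁻¹' D)).toReal - (ν (B ⁻¹' D)).toReal| ≤ n * p ^ 2 := by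
  obtain ⟨hp0, hp1⟩ := hp
  have hp0' : (0 : ℝ) ≤ p := le_of_lt hp0
  have hp1' : p ≤ 1 := le_of_lt hp1
  set q : ℕ → ℝ := pois ((n : ℝ) * p) with hq
  set b : ℕ → ℝ := binom n p with hb
  have hq0 : ∀ k, 0 ≤ q k := pois_nonneg (by positivity)
  have hb0 : ∀ k, 0 ≤ b k := binom_nonneg hp0' hp1'
  have hqs : Summable q := summable_pois _
  have hbs : Summable b := summable_binom n p
  -- identify the measures
  have hμ : μ (L ⁻¹' D) = ENNReal.ofReal (∑' k, D.indicator q k) := by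
    refine measure_preimage_eq μ L q hq0 hqs (tsum_pois _) (fun k => ?_) D
    rw [hL k]; rfl
  have hν : ν (B ⁻¹' D) = ENNReal.ofReal (∑' k, D.indicator b k) := by
    refine measure_preimage_eq ν B b hb0 hbs (tsum_binom n p) (fun k => ?_) D
    rw [hB k]; rfl
  have hiq : 0 ≤ ∑' k, D.indicator q k :=
    tsum_nonneg fun k => Set.indicator_nonneg (fun j _ => hq0 j) k
  have hib : 0 ≤ ∑' k, D.indicator b k :=
    tsum_nonneg fun k => Set.indicator_nonneg (fun j _ => hb0 j) k
  rw [hμ, hν, ENNReal.toReal_ofReal hiq, ENNReal.toReal_ofReal hib]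
  -- now purely analytic
  set A := ∑' k, D.indicator q k
  set C := ∑' k, D.indicator b k
  set A' := ∑' k, Dᶜ.indicator q k
  set C' := ∑' k, Dᶜ.indicator b k
  have hqind : Summable (D.indicator q) := hqs.indicator D
  have hbind : Summable (D.indicator b) := hbs.indicator D
  have hqind' : Summable (Dᶜ.indicator q) := hqs.indicator Dᶜ
  have hbind' : Summable (Dᶜ.indicator b) := hbs.indicator Dᶜ
  have hAA' : A + A' = 1 := by
    rw [← tsum_pois ((n : ℝ) * p), ← Summable.tsum_add hqind hqind']
    exact tsum_congr fun k => by
      simpa [hq] using congrFun (Set.indicator_self_add_compl D q) k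
  have hCC' : C + C' = 1 := by
    rw [← tsum_binom n p, ← Summable.tsum_add hbind hbind']
    exact tsum_congr fun k => by
      simpa [hb] using congrFun (Set.indicator_self_add_compl D b) k
  have habs : Summable fun k => |b k - q k| := (hbs.sub hqs).abs
  have hkey : ∑' k, |b k - q k| ≤ 2 * n * p ^ 2 := lecam hp0' hp1' n
  -- |A - C| ≤ ∑ over D of |q - b|
  have hsplit : (∑' k, D.indicator (fun j => |b j - q j|) k) +
      (∑' k, Dᶜ.indicator (fun j => |b j - q j|) k) = ∑' k, |b k - q k| := by
    rw [← Summable.tsum_add (habs.indicator D) (habs.indicator Dᶜ)]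
    exact tsum_congr fun k => by
      simpa using congrFun (Set.indicator_self_add_compl D fun j => |b j - q j|) k
  have h1 : |A - C| ≤ ∑' k, D.indicator (fun j => |b j - q j|) k := by
    have : A - C = ∑' k, (D.indicator q k - D.indicator b k) :=
      (Summable.tsum_sub hqind hbind).symm
    rw [this]
    have hn1 : |∑' k, (D.indicator q k - D.indicator b k)| ≤
        ∑' k, |D.indicator q k - D.indicator b k| := by
      simpa [Real.norm_eq_abs] using
        norm_tsum_le_tsum_norm (f := fun k => D.indicator q k - D.indicator b k)
          (by simpa [Real.norm_eq_abs] using (hqind.sub hbind).abs)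
    refine hn1.trans (Summable.tsum_le_tsum (fun k => ?_)
      ((hqind.sub hbind).abs) (habs.indicator D))
    by_cases hk : k ∈ D
    · simp [Set.indicator_of_mem hk, abs_sub_comm]
    · simp [Set.indicator_of_notMem hk]
  have h2 : |A' - C'| ≤ ∑' k, Dᶜ.indicator (fun j => |b j - q j|) k := by
    have : A' - C' = ∑' k, (Dᶜ.indicator q k - Dᶜ.indicator b k) :=
      (Summable.tsum_sub hqind' hbind').symm
    rw [this]
    have hn1 : |∑' k, (Dᶜ.indicator q k - Dᶜ.indicator b k)| ≤
        ∑' k, |Dᶜ.indicator q k - Dᶜ.indicator b k| := by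
      simpa [Real.norm_eq_abs] using
        norm_tsum_le_tsum_norm (f := fun k => Dᶜ.indicator q k - Dᶜ.indicator b k)
          (by simpa [Real.norm_eq_abs] using (hqind'.sub hbind').abs)
    refine hn1.trans (Summable.tsum_le_tsum (fun k => ?_)
      ((hqind'.sub hbind').abs) (habs.indicator Dᶜ))
    by_cases hk : k ∈ Dᶜ
    · simp [Set.indicator_of_mem hk, abs_sub_comm]
    · simp [Set.indicator_of_notMem hk]
  have hAC : A - C = C' - A' := by linarith
  have : 2 * |A - C| ≤ 2 * n * p ^ 2 := by
    calc 2 * |A - C| = |A - C| + |A' - C'| := by rw [hAC, abs_sub_comm]; ring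
      _ ≤ _ + _ := add_le_add h1 h2
      _ = ∑' k, |b k - q k| := hsplit
      _ ≤ 2 * n * p ^ 2 := hkey
  linarith
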